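/- arXiv:1910.10861 — 8 statements merged into one kernel-verified Lean document; each statement's English description precedes it below -/
import Mathlib

section
/- Let H, r, b, λ be positive integers with λ ≤ min{r, b} and r + b − 2λ < H. Define an array P indexed by rows B ∈ C([H], b) and columns A ∈ C([H], r) by: p_{B,A} = ((A ∪ B) \ (A ∩ B), A ∩ B) if |A ∩ B| = λ, and p_{B,A} = * otherwise. Then P satisfies PDA condition C2: if p_{B₁,A₁} = p_{B₂,A₂} is a non-star entry with (B₁, A₁) ≠ (B₂, A₂), then B₁ ≠ B₂, A₁ ≠ A₂, and both p_{B₁,A₂} and p_{B₂,A₁} are stars. -/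
/-- If two sets have the same union and intersection with a third set, they are equal. -/
lemma aux_cancel {A C B : Finset ℕ} (hU : A ∪ B = C ∪ B) (hI : A ∩ B = C ∩ B) : A = C := by
  ext x
  have h1 := Finset.ext_iff.mp hU x
  have h2 := Finset.ext_iff.mp hI x
  simp only [Finset.mem_union, Finset.mem_inter] at h1 h2
  by_cases hx : x ∈ B <;> tauto

/-- PDA condition C2 for the first array `P` of Construction 1: entries are
`((A ∪ B) \ (A ∩ B), A ∩ B)` when `|A ∩ B| = λ` (star otherwise). If two
non-star entries coincide at distinct positions, then the rows differ, the
columns differ, and both cross entries are stars. -/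
theorem stmt4 (H r b l : ℕ) (hH : 0 < H) (hr : 0 < r) (hb : 0 < b) (hl : 0 < l)
    (hlr : l ≤ r) (hlb : l ≤ b) (hm : r + b - 2 * l < H)
    (B₁ B₂ A₁ A₂ : Finset ℕ)
    (hB₁ : B₁ ∈ (Finset.Icc 1 H).powersetCard b)
    (hB₂ : B₂ ∈ (Finset.Icc 1 H).powersetCard b)
    (hA₁ : A₁ ∈ (Finset.Icc 1 H).powersetCard r)
    (hA₂ : A₂ ∈ (Finset.Icc 1 H).powersetCard r)
    (h₁ : (A₁ ∩ B₁).card = l) (h₂ : (A₂ ∩ B₂).card = l)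
    (heq : ((A₁ ∪ B₁) \ (A₁ ∩ B₁), A₁ ∩ B₁) = ((A₂ ∪ B₂) \ (A₂ ∩ B₂), A₂ ∩ B₂))
    (hne : (B₁, A₁) ≠ (B₂, A₂)) :
    B₁ ≠ B₂ ∧ A₁ ≠ A₂ ∧ (A₂ ∩ B₁).card ≠ l ∧ (A₁ ∩ B₂).card ≠ l := by
  have hD : (A₁ ∪ B₁) \ (A₁ ∩ B₁) = (A₂ ∪ B₂) \ (A₂ ∩ B₂) := (Prod.ext_iff.mp heq).1
  have hI : A₁ ∩ B₁ = A₂ ∩ B₂ := (Prod.ext_iff.mp heq).2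
  have hs1 : A₁ ∩ B₁ ⊆ A₁ ∪ B₁ := Finset.inter_subset_left.trans Finset.subset_union_left
  have hs2 : A₂ ∩ B₂ ⊆ A₂ ∪ B₂ := Finset.inter_subset_left.trans Finset.subset_union_left
  have hU : A₁ ∪ B₁ = A₂ ∪ B₂ := by
    calc A₁ ∪ B₁ = (A₁ ∪ B₁) \ (A₁ ∩ B₁) ∪ (A₁ ∩ B₁) := (Finset.sdiff_union_of_subset hs1).symm
      _ = (A₂ ∪ B₂) \ (A₂ ∩ B₂) ∪ (A₂ ∩ B₂) := by rw [hD, hI]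
      _ = A₂ ∪ B₂ := Finset.sdiff_union_of_subset hs2
  have cardA₁ : A₁.card = r := (Finset.mem_powersetCard.mp hA₁).2
  have cardA₂ : A₂.card = r := (Finset.mem_powersetCard.mp hA₂).2
  -- A₁ ≠ A₂
  have hAA : A₁ ≠ A₂ := by
    intro hA
    apply hne
    have hB : B₁ = B₂ := by
      apply aux_cancel (B := A₁)
      · rw [Finset.union_comm, hU, hA, Finset.union_comm]
      · rw [Finset.inter_comm, hI, hA, Finset.inter_comm]
    rw [hA, hB]
  -- B₁ ≠ B₂
  have hBB : B₁ ≠ B₂ := by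
    intro hB
    apply hne
    have hA : A₁ = A₂ := by
      apply aux_cancel (B := B₁)
      · rw [hU, hB]
      · rw [hI, hB]
    rw [hA, hB]
  refine ⟨hBB, hAA, ?_, ?_⟩
  · -- (A₂ ∩ B₁).card ≠ l
    intro hc
    have hsub : A₁ ∩ B₁ ⊆ A₂ ∩ B₁ :=
      Finset.subset_inter (hI ▸ Finset.inter_subset_left) Finset.inter_subset_right
    have hEq : A₂ ∩ B₁ = A₁ ∩ B₁ :=
      (Finset.eq_of_subset_of_card_le hsub (by rw [hc, h₁])).symm
    have hsubA : A₂ ⊆ A₁ := by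
      intro x hx
      have hx' : x ∈ A₁ ∪ B₁ := hU ▸ Finset.mem_union_left _ hx
      rcases Finset.mem_union.mp hx' with h | h
      · exact h
      · have : x ∈ A₂ ∩ B₁ := Finset.mem_inter.mpr ⟨hx, h⟩
        rw [hEq] at this
        exact (Finset.mem_inter.mp this).1
    exact hAA ((Finset.eq_of_subset_of_card_le hsubA (by rw [cardA₁, cardA₂])).symm)
  · -- (A₁ ∩ B₂).card ≠ l
    intro hc
    have hsub : A₂ ∩ B₂ ⊆ A₁ ∩ B₂ :=
      Finset.subset_inter (hI ▸ Finset.inter_subset_left) Finset.inter_subset_right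
    have hEq : A₁ ∩ B₂ = A₂ ∩ B₂ :=
      (Finset.eq_of_subset_of_card_le hsub (by rw [hc, h₂])).symm
    have hsubA : A₁ ⊆ A₂ := by
      intro x hx
      have hx' : x ∈ A₂ ∪ B₂ := hU ▸ Finset.mem_union_left _ hx
      rcases Finset.mem_union.mp hx' with h | h
      · exact h
      · have : x ∈ A₁ ∩ B₂ := Finset.mem_inter.mpr ⟨hx, h⟩
        rw [hEq] at this
        exact (Finset.mem_inter.mp this).1
    exact hAA (Finset.eq_of_subset_of_card_le hsubA (by rw [cardA₁, cardA₂]))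
end

section
/- Let H, r, b, λ be positive integers with λ ≤ min{r, b} and r + b − 2λ < H. Define an array P' indexed by rows B ∈ C([H], b) and columns A ∈ C([H], r) by: p'_{B,A} = ((A ∪ B) \ (A ∩ B), A \ B) if |A ∩ B| = λ, and star otherwise. Then P' satisfies PDA condition C2: equal non-star entries lie in distinct rows and distinct columns, and the two cross entries are stars. -/
/-- PDA condition C2 for the second array `P'` of Construction 1: entries are
`((A ∪ B) \ (A ∩ B), A \ B)` when `|A ∩ B| = λ` (star otherwise). Equal non-star
entries at distinct positions lie in distinct rows and distinct columns, and
both cross entries are stars. -/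
theorem stmt6 (H r b l : ℕ) (hH : 0 < H) (hr : 0 < r) (hb : 0 < b) (hl : 0 < l)
    (hlr : l ≤ r) (hlb : l ≤ b) (hm : r + b - 2 * l < H)
    (B₁ B₂ A₁ A₂ : Finset ℕ)
    (hB₁ : B₁ ∈ (Finset.Icc 1 H).powersetCard b)
    (hB₂ : B₂ ∈ (Finset.Icc 1 H).powersetCard b)
    (hA₁ : A₁ ∈ (Finset.Icc 1 H).powersetCard r)
    (hA₂ : A₂ ∈ (Finset.Icc 1 H).powersetCard r)
    (h₁ : (A₁ ∩ B₁).card = l) (h₂ : (A₂ ∩ B₂).card = l)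
    (heq : ((A₁ ∪ B₁) \ (A₁ ∩ B₁), A₁ \ B₁) = ((A₂ ∪ B₂) \ (A₂ ∩ B₂), A₂ \ B₂))
    (hne : (B₁, A₁) ≠ (B₂, A₂)) :
    B₁ ≠ B₂ ∧ A₁ ≠ A₂ ∧ (A₂ ∩ B₁).card ≠ l ∧ (A₁ ∩ B₂).card ≠ l := by
  injection heq with hC hJ
  have hK : B₁ \ A₁ = B₂ \ A₂ := by
    have e1 : B₁ \ A₁ = ((A₁ ∪ B₁) \ (A₁ ∩ B₁)) \ (A₁ \ B₁) := by
      ext x; simp only [Finset.mem_sdiff, Finset.mem_union, Finset.mem_inter]; tauto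
    have e2 : B₂ \ A₂ = ((A₂ ∪ B₂) \ (A₂ ∩ B₂)) \ (A₂ \ B₂) := by
      ext x; simp only [Finset.mem_sdiff, Finset.mem_union, Finset.mem_inter]; tauto
    rw [e1, e2, hC, hJ]
  have hLne : A₁ ∩ B₁ ≠ A₂ ∩ B₂ := by
    intro hL
    apply hne
    have hA : A₁ = A₂ := by
      ext x
      have h1 := Finset.ext_iff.mp hJ x
      have h2 := Finset.ext_iff.mp hL x
      simp only [Finset.mem_sdiff, Finset.mem_inter] at h1 h2
      tauto
    have hB : B₁ = B₂ := by
      ext x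
      have h1 := Finset.ext_iff.mp hK x
      have h2 := Finset.ext_iff.mp hL x
      simp only [Finset.mem_sdiff, Finset.mem_inter] at h1 h2
      tauto
    exact Prod.ext hB hA
  have hAne : A₁ ≠ A₂ := by
    intro hA
    apply hLne
    ext x
    have h1 := Finset.ext_iff.mp hJ x
    have h2 := Finset.ext_iff.mp hA x
    simp only [Finset.mem_sdiff, Finset.mem_inter] at h1 ⊢
    tauto
  have hBne : B₁ ≠ B₂ := by
    intro hB
    apply hLne
    ext x
    have h1 := Finset.ext_iff.mp hK x
    have h2 := Finset.ext_iff.mp hB x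
    simp only [Finset.mem_sdiff, Finset.mem_inter] at h1 ⊢
    tauto
  have key1 : A₂ ∩ B₁ = (A₁ ∩ B₁) ∩ (A₂ ∩ B₂) := by
    ext x
    have h1 := Finset.ext_iff.mp hJ x
    have h2 := Finset.ext_iff.mp hK x
    simp only [Finset.mem_sdiff, Finset.mem_inter] at h1 h2 ⊢
    constructor
    · rintro ⟨ha2, hb1⟩
      have ha1 : x ∈ A₁ := by
        by_contra h; exact (h2.mp ⟨hb1, h⟩).2 ha2
      have hb2 : x ∈ B₂ := by
        by_contra h; exact (h1.mpr ⟨ha2, h⟩).2 hb1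
      exact ⟨⟨ha1, hb1⟩, ⟨ha2, hb2⟩⟩
    · rintro ⟨⟨_, hb1⟩, ⟨ha2, _⟩⟩; exact ⟨ha2, hb1⟩
  have key2 : A₁ ∩ B₂ = (A₁ ∩ B₁) ∩ (A₂ ∩ B₂) := by
    ext x
    have h1 := Finset.ext_iff.mp hJ x
    have h2 := Finset.ext_iff.mp hK x
    simp only [Finset.mem_sdiff, Finset.mem_inter] at h1 h2 ⊢
    constructor
    · rintro ⟨ha1, hb2⟩
      have hb1 : x ∈ B₁ := by
        by_contra h; exact (h1.mp ⟨ha1, h⟩).2 hb2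
      have ha2 : x ∈ A₂ := by
        by_contra h; exact (h2.mpr ⟨hb2, h⟩).2 ha1
      exact ⟨⟨ha1, hb1⟩, ⟨ha2, hb2⟩⟩
    · rintro ⟨⟨ha1, _⟩, ⟨_, hb2⟩⟩; exact ⟨ha1, hb2⟩
  have hcard : ((A₁ ∩ B₁) ∩ (A₂ ∩ B₂)).card ≠ l := by
    intro hc
    apply hLne
    have hsub : (A₁ ∩ B₁) ∩ (A₂ ∩ B₂) ⊆ A₁ ∩ B₁ := Finset.inter_subset_left
    have e : (A₁ ∩ B₁) ∩ (A₂ ∩ B₂) = A₁ ∩ B₁ :=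
      Finset.eq_of_subset_of_card_le hsub (by rw [hc, h₁])
    have hsub2 : A₁ ∩ B₁ ⊆ A₂ ∩ B₂ := by
      rw [← e]; exact Finset.inter_subset_right
    exact Finset.eq_of_subset_of_card_le hsub2 (by rw [h₁, h₂])
  exact ⟨hBne, hAne, key1 ▸ hcard, key2 ▸ hcard⟩
end

section
/- Let H, r, b, λ be positive integers with λ ≤ min{r,b} and r + b − 2λ < H. The number of distinct non-star symbols occurring in the array P of Construction 1 is exactly C(H, r + b − 2λ) · C(H − (r + b − 2λ), λ). -/
/-- The number of distinct non-star symbols occurring in the array `P` of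
Construction 1 is `C(H, r+b−2λ) · C(H−(r+b−2λ), λ)`. -/
theorem stmt8 (H r b l : ℕ) (hH : 0 < H) (hr : 0 < r) (hb : 0 < b) (hl : 0 < l)
    (hlr : l ≤ r) (hlb : l ≤ b) (hm : r + b - 2 * l < H) :
    (((((Finset.Icc 1 H).powersetCard b) ×ˢ ((Finset.Icc 1 H).powersetCard r)).filter
        (fun p => (p.2 ∩ p.1).card = l)).image
        (fun p => ((p.2 ∪ p.1) \ (p.2 ∩ p.1), p.2 ∩ p.1))).card
      = Nat.choose H (r + b - 2 * l) * Nat.choose (H - (r + b - 2 * l)) l := by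
  classical
  set U : Finset ℕ := Finset.Icc 1 H with hU
  have hUcard : U.card = H := by simp [hU]
  set m := r + b - 2 * l with hmdef
  -- the image equals the set of disjoint pairs (C, I) with |C| = m, |I| = l
  have himg :
      ((((U.powersetCard b) ×ˢ (U.powersetCard r)).filter
        (fun p => (p.2 ∩ p.1).card = l)).image
        (fun p => ((p.2 ∪ p.1) \ (p.2 ∩ p.1), p.2 ∩ p.1)))
      = ((U.powersetCard m) ×ˢ (U.powersetCard l)).filter
          (fun q => Disjoint q.1 q.2) := by
    ext ⟨C, I⟩
    simp only [Finset.mem_image, Finset.mem_filter, Finset.mem_product,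
      Finset.mem_powersetCard]
    constructor
    · rintro ⟨⟨B, A⟩, ⟨⟨⟨hBU, hBcard⟩, hAU, hAcard⟩, hABl⟩, hCI⟩
      dsimp only at hABl hAcard hBcard hAU hBU
      simp only [Prod.mk.injEq] at hCI
      obtain ⟨hC, hI⟩ := hCI
      have hsub : A ∩ B ⊆ A ∪ B := (Finset.inter_subset_left).trans Finset.subset_union_left
      have hu : (A ∪ B).card + (A ∩ B).card = A.card + B.card :=
        Finset.card_union_add_card_inter A B
      have hCcard : ((A ∪ B) \ (A ∩ B)).card = m := by
        rw [Finset.card_sdiff_of_subset hsub]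
        omega
      refine ⟨⟨⟨?_, by rw [← hC]; exact hCcard⟩, ?_, by rw [← hI]; exact hABl⟩, ?_⟩
      · rw [← hC]
        exact (Finset.sdiff_subset).trans (Finset.union_subset hAU hBU)
      · rw [← hI]
        exact (Finset.inter_subset_left).trans hAU
      · rw [← hC, ← hI]
        exact Finset.sdiff_disjoint
    · rintro ⟨⟨⟨hCU, hCcard⟩, hIU, hIcard⟩, hdis⟩
      obtain ⟨CA, hCAsub, hCAcard⟩ : ∃ t ⊆ C, t.card = r - l :=
        Finset.exists_subset_card_eq (by omega)
      set CB := C \ CA with hCB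
      have hCBcard : CB.card = b - l := by
        rw [hCB, Finset.card_sdiff_of_subset hCAsub]; omega
      have dAB : Disjoint CA CB := Finset.disjoint_sdiff
      have dAI : Disjoint CA I := hdis.mono_left hCAsub
      have dBI : Disjoint CB I := hdis.mono_left Finset.sdiff_subset
      have hCC : CA ∪ CB = C := Finset.union_sdiff_of_subset hCAsub
      set A := CA ∪ I with hA
      set B := CB ∪ I with hB
      have hABi : A ∩ B = I := by
        ext x
        simp only [hA, hB, Finset.mem_inter, Finset.mem_union]
        constructor
        · rintro ⟨ha | hi, hb | hi'⟩
          · exact absurd hb (Finset.disjoint_left.mp dAB ha)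
          · exact hi'
          · exact hi
          · exact hi
        · intro hi; exact ⟨Or.inr hi, Or.inr hi⟩
      have hABu : A ∪ B = C ∪ I := by
        ext x
        simp only [hA, hB, Finset.mem_union, ← hCC]
        tauto
      have hAcard : A.card = r := by
        rw [hA, Finset.card_union_of_disjoint dAI, hCAcard, hIcard]; omega
      have hBcard : B.card = b := by
        rw [hB, Finset.card_union_of_disjoint dBI, hCBcard, hIcard]; omega
      refine ⟨⟨B, A⟩, ⟨⟨⟨?_, hBcard⟩, ?_, hAcard⟩, by rw [hABi, hIcard]⟩, ?_⟩
      · exact Finset.union_subset ((Finset.sdiff_subset).trans hCU) hIU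
      · exact Finset.union_subset (hCAsub.trans hCU) hIU
      · simp only [Prod.mk.injEq]
        constructor
        · rw [hABu, hABi, Finset.union_sdiff_cancel_right hdis]
        · exact hABi
  rw [himg]
  -- now count the pairs
  have hsplit :
      ((U.powersetCard m) ×ˢ (U.powersetCard l)).filter (fun q => Disjoint q.1 q.2)
      = (U.powersetCard m).biUnion
          (fun C => ((U \ C).powersetCard l).image (fun I => (C, I))) := by
    ext ⟨C, I⟩
    simp only [Finset.mem_filter, Finset.mem_product, Finset.mem_biUnion,
      Finset.mem_image, Finset.mem_powersetCard, Prod.mk.injEq]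
    constructor
    · rintro ⟨⟨hC, hIU, hIcard⟩, hdis⟩
      exact ⟨C, hC, I, ⟨Finset.subset_sdiff.mpr ⟨hIU, hdis.symm⟩, hIcard⟩, rfl, rfl⟩
    · rintro ⟨C', hC', I', ⟨hI'sub, hI'card⟩, rfl, rfl⟩
      rw [Finset.subset_sdiff] at hI'sub
      exact ⟨⟨hC', hI'sub.1, hI'card⟩, hI'sub.2.symm⟩
  rw [hsplit, Finset.card_biUnion]
  · have hterm : ∀ C ∈ U.powersetCard m,
        (((U \ C).powersetCard l).image (fun I => (C, I))).card
          = Nat.choose (H - m) l := by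
      intro C hC
      rw [Finset.mem_powersetCard] at hC
      rw [Finset.card_image_of_injective _ (fun a b h => (Prod.mk.injEq _ _ _ _).mp h |>.2),
        Finset.card_powersetCard, Finset.card_sdiff_of_subset hC.1, hUcard, hC.2]
    rw [Finset.sum_congr rfl hterm, Finset.sum_const, Finset.card_powersetCard, hUcard,
      smul_eq_mul]
  · intro C hC D hD hCD
    simp only [Finset.disjoint_left, Finset.mem_image]
    rintro ⟨x, y⟩ ⟨I, _, h⟩ ⟨J, _, h'⟩
    apply hCD
    rw [← h'] at h
    exact ((Prod.mk.injEq _ _ _ _).mp h).1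
end

section
/- Let H, b, r, λ be positive integers with b < r + λ < H and λ < b. Define an array P with rows indexed by pairs (B, Γ) where B ∈ C([H], b) and Γ ∈ C(B, λ), and columns indexed by A ∈ C([H], r), where p_{(B,Γ),A} = (A ∪ Γ, A \ B) if A ∩ Γ = ∅ and B ⊆ A ∪ Γ, and star otherwise. Then P satisfies PDA condition C2: if p_{(B₁,Γ₁),A₁} = p_{(B₂,Γ₂),A₂} is a non-star entry with ((B₁,Γ₁), A₁) ≠ ((B₂,Γ₂), A₂), then (B₁,Γ₁) ≠ (B₂,Γ₂), A₁ ≠ A₂, and p_{(B₁,Γ₁),A₂} = p_{(B₂,Γ₂),A₁} = *. -/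
/-- PDA condition C2 for the array of Construction 2: rows are pairs `(B, Γ)`
with `B ∈ C([H],b)`, `Γ ∈ C(B,λ)`; columns are `A ∈ C([H],r)`; the entry is
`(A ∪ Γ, A \ B)` when `A ∩ Γ = ∅` and `B ⊆ A ∪ Γ` (star otherwise). Equal
non-star entries at distinct positions lie in distinct rows and distinct
columns, and both cross entries are stars. -/
theorem stmt10 (H b r l : ℕ) (hH : 0 < H) (hb : 0 < b) (hr : 0 < r) (hl : 0 < l)
    (hbrl : b < r + l) (hrlH : r + l < H) (hlb : l < b)
    (B₁ B₂ Γ₁ Γ₂ A₁ A₂ : Finset ℕ)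
    (hB₁ : B₁ ∈ (Finset.Icc 1 H).powersetCard b) (hΓ₁ : Γ₁ ⊆ B₁) (hΓ₁c : Γ₁.card = l)
    (hB₂ : B₂ ∈ (Finset.Icc 1 H).powersetCard b) (hΓ₂ : Γ₂ ⊆ B₂) (hΓ₂c : Γ₂.card = l)
    (hA₁ : A₁ ∈ (Finset.Icc 1 H).powersetCard r)
    (hA₂ : A₂ ∈ (Finset.Icc 1 H).powersetCard r)
    (h₁ : A₁ ∩ Γ₁ = ∅ ∧ B₁ ⊆ A₁ ∪ Γ₁) (h₂ : A₂ ∩ Γ₂ = ∅ ∧ B₂ ⊆ A₂ ∪ Γ₂)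
    (heq : (A₁ ∪ Γ₁, A₁ \ B₁) = (A₂ ∪ Γ₂, A₂ \ B₂))
    (hne : ((B₁, Γ₁), A₁) ≠ ((B₂, Γ₂), A₂)) :
    (B₁, Γ₁) ≠ (B₂, Γ₂) ∧ A₁ ≠ A₂
      ∧ ¬(A₂ ∩ Γ₁ = ∅ ∧ B₁ ⊆ A₂ ∪ Γ₁) ∧ ¬(A₁ ∩ Γ₂ = ∅ ∧ B₂ ⊆ A₁ ∪ Γ₂) := by
  obtain ⟨h1d, h1s⟩ := h₁
  obtain ⟨h2d, h2s⟩ := h₂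
  simp only [Prod.mk.injEq] at heq
  obtain ⟨hC, hI⟩ := heq
  simp only [Finset.mem_powersetCard] at hA₁ hA₂ hB₁ hB₂
  have hd1 : Disjoint A₁ Γ₁ := Finset.disjoint_iff_inter_eq_empty.mpr h1d
  have hd2 : Disjoint A₂ Γ₂ := Finset.disjoint_iff_inter_eq_empty.mpr h2d
  set C := A₁ ∪ Γ₁ with hCdef
  have hC2 : A₂ ∪ Γ₂ = C := hC.symm
  have eA1 : A₁ = C \ Γ₁ := (Finset.union_sdiff_cancel_right hd1).symm
  have eA2 : A₂ = C \ Γ₂ := by rw [← hC2]; exact (Finset.union_sdiff_cancel_right hd2).symm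
  have eΓ1 : Γ₁ = C \ A₁ := (Finset.union_sdiff_cancel_left hd1).symm
  have eΓ2 : Γ₂ = C \ A₂ := by rw [← hC2]; exact (Finset.union_sdiff_cancel_left hd2).symm
  have hCB1 : C \ B₁ = A₁ \ B₁ := by
    rw [hCdef, Finset.union_sdiff_distrib, Finset.sdiff_eq_empty_iff_subset.mpr hΓ₁,
      Finset.union_empty]
  have hCB2 : C \ B₂ = A₂ \ B₂ := by
    rw [← hC2, Finset.union_sdiff_distrib, Finset.sdiff_eq_empty_iff_subset.mpr hΓ₂,
      Finset.union_empty]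
  have hB : B₁ = B₂ := by
    calc B₁ = C \ (C \ B₁) := (Finset.sdiff_sdiff_eq_self h1s).symm
      _ = C \ (C \ B₂) := by rw [hCB1, hI, hCB2]
      _ = B₂ := Finset.sdiff_sdiff_eq_self (hC2 ▸ h2s)
  have hCcard : C.card = r + l := by
    rw [hCdef, Finset.card_union_of_disjoint hd1, hA₁.2, hΓ₁c]
  have hAne : A₁ ≠ A₂ := by
    intro h
    apply hne
    have : Γ₁ = Γ₂ := by rw [eΓ1, eΓ2, h]
    simp [h, hB, this]
  have hA2sub : A₂ ⊆ C := by rw [← hC2]; exact Finset.subset_union_left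
  have hA1sub : A₁ ⊆ C := Finset.subset_union_left
  have hΓ1sub : Γ₁ ⊆ C := Finset.subset_union_right
  have hΓ2sub : Γ₂ ⊆ C := by rw [← hC2]; exact Finset.subset_union_right
  refine ⟨?_, hAne, ?_, ?_⟩
  · intro h
    apply hAne
    injection h with _ hΓ
    rw [eA1, eA2, hΓ]
  · rintro ⟨hd, hs⟩
    have hdisj : Disjoint A₂ Γ₁ := Finset.disjoint_iff_inter_eq_empty.mpr hd
    have hsub : A₂ ∪ Γ₁ ⊆ C := Finset.union_subset hA2sub hΓ1sub
    have hcard : (A₂ ∪ Γ₁).card = C.card := by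
      rw [Finset.card_union_of_disjoint hdisj, hA₂.2, hΓ₁c, hCcard]
    have hEq : A₂ ∪ Γ₁ = C := Finset.eq_of_subset_of_card_le hsub (le_of_eq hcard.symm)
    apply hAne
    have : A₂ = C \ Γ₁ := by rw [← hEq, Finset.union_sdiff_cancel_right hdisj]
    rw [this, ← eA1]
  · rintro ⟨hd, hs⟩
    have hdisj : Disjoint A₁ Γ₂ := Finset.disjoint_iff_inter_eq_empty.mpr hd
    have hsub : A₁ ∪ Γ₂ ⊆ C := Finset.union_subset hA1sub hΓ2sub
    have hcard : (A₁ ∪ Γ₂).card = C.card := by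
      rw [Finset.card_union_of_disjoint hdisj, hA₁.2, hΓ₂c, hCcard]
    have hEq : A₁ ∪ Γ₂ = C := Finset.eq_of_subset_of_card_le hsub (le_of_eq hcard.symm)
    apply hAne
    have : A₁ = C \ Γ₂ := by rw [← hEq, Finset.union_sdiff_cancel_right hdisj]
    rw [this, ← eA2]
end

section
/- Let H, b, r, λ be positive integers with b < r + λ < H and λ < b. In the array of Construction 2, for every symbol (C, I) the intersection of all columns A (as r-subsets of [H]) containing (C, I) equals I; in particular it is nonempty, so the array satisfies CPDA condition C3. -/
open scoped Classical

/-- In the array of Construction 2, for every symbol `(C, I)` occurring in the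
array the intersection of all columns `A` containing `(C, I)` equals `I`; in
particular it is nonempty (CPDA condition C3). -/
theorem stmt12 (H b r l : ℕ) (hH : 0 < H) (hb : 0 < b) (hr : 0 < r) (hl : 0 < l)
    (hbrl : b < r + l) (hrlH : r + l < H) (hlb : l < b)
    (C I : Finset ℕ)
    (hocc : ∃ B ∈ (Finset.Icc 1 H).powersetCard b, ∃ Γ ∈ B.powersetCard l,
      ∃ A ∈ (Finset.Icc 1 H).powersetCard r,
        A ∩ Γ = ∅ ∧ B ⊆ A ∪ Γ ∧ (A ∪ Γ, A \ B) = (C, I)) :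
    (⋂ A ∈ ((Finset.Icc 1 H).powersetCard r).filter
        (fun A => ∃ B ∈ (Finset.Icc 1 H).powersetCard b, ∃ Γ ∈ B.powersetCard l,
          A ∩ Γ = ∅ ∧ B ⊆ A ∪ Γ ∧ (A ∪ Γ, A \ B) = (C, I)), (A : Set ℕ)) = (I : Set ℕ)
    ∧ I.Nonempty := by
  obtain ⟨B, hB, Γ, hΓ, A, hA, hAΓ, hBsub, heq⟩ := hocc
  rw [Finset.mem_powersetCard] at hB hΓ hA
  obtain ⟨hBH, hBb⟩ := hB
  obtain ⟨hΓB, hΓl⟩ := hΓ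
  obtain ⟨hAH, hAr⟩ := hA
  obtain ⟨hCeq, hIeq⟩ := Prod.mk.inj heq
  -- basic facts
  have hdisj : Disjoint A Γ := Finset.disjoint_iff_inter_eq_empty.mpr hAΓ
  have hCH : C ⊆ Finset.Icc 1 H := by
    rw [← hCeq]; exact Finset.union_subset hAH (hΓB.trans hBH)
  have hCcard : C.card = r + l := by
    rw [← hCeq, Finset.card_union_of_disjoint hdisj, hAr, hΓl]
  have hBC : B ⊆ C := by rw [← hCeq]; exact hBsub
  have hIC : I = C \ B := by
    rw [← hIeq, ← hCeq]
    ext x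
    simp only [Finset.mem_sdiff, Finset.mem_union]
    constructor
    · rintro ⟨hx, hxB⟩; exact ⟨Or.inl hx, hxB⟩
    · rintro ⟨hx | hx, hxB⟩
      · exact ⟨hx, hxB⟩
      · exact absurd (hΓB hx) hxB
  have hIcard : I.card = r + l - b := by
    rw [hIC, Finset.card_sdiff_of_subset hBC, hCcard, hBb]
  have hInonempty : I.Nonempty := by
    rw [← Finset.card_pos, hIcard]; omega
  have hCIcard : (C \ I).card = b := by
    rw [Finset.card_sdiff_of_subset, hCcard, hIcard]
    · omega
    · rw [hIC]; exact Finset.sdiff_subset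
  -- any A' with I ⊆ A' ⊆ C and card r is a column containing (C, I)
  have hcol : ∀ A' : Finset ℕ, I ⊆ A' → A' ⊆ C → A'.card = r →
      A' ∈ ((Finset.Icc 1 H).powersetCard r).filter
        (fun A => ∃ B ∈ (Finset.Icc 1 H).powersetCard b, ∃ Γ ∈ B.powersetCard l,
          A ∩ Γ = ∅ ∧ B ⊆ A ∪ Γ ∧ (A ∪ Γ, A \ B) = (C, I)) := by
    intro A' hIA' hA'C hA'r
    simp only [Finset.mem_filter, Finset.mem_powersetCard]
    refine ⟨⟨hA'C.trans hCH, hA'r⟩, C \ I, ?_, C \ A', ?_, ?_, ?_, ?_⟩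
    · exact ⟨Finset.sdiff_subset.trans hCH, hCIcard⟩
    · refine ⟨Finset.sdiff_subset_sdiff le_rfl hIA', ?_⟩
      rw [Finset.card_sdiff_of_subset hA'C, hCcard, hA'r]; omega
    · rw [Finset.inter_sdiff_self]
    · rw [Finset.union_sdiff_of_subset hA'C]; exact Finset.sdiff_subset
    · rw [Finset.union_sdiff_of_subset hA'C]
      refine Prod.ext rfl ?_
      ext x
      simp only [Finset.mem_sdiff, not_and, not_not]
      constructor
      · rintro ⟨hx, h⟩; exact h (hA'C hx)
      · intro hx; exact ⟨hIA' hx, fun _ => hx⟩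
  constructor
  · ext x
    simp only [Set.mem_iInter, Finset.coe_sort_coe, Set.mem_setOf_eq,
      Finset.mem_coe]
    constructor
    · intro hx
      by_contra hxI
      -- build a column avoiding x
      obtain ⟨S, hS, hScard⟩ := Finset.exists_subset_card_eq (s := (C \ I).erase x) (n := b - l)
        (by
          have := Finset.pred_card_le_card_erase (a := x) (s := C \ I)
          omega)
      set A' := I ∪ S with hA'
      have hSx : x ∉ S := fun h => (Finset.mem_erase.mp (hS h)).1 rfl
      have hSCI : S ⊆ C \ I := hS.trans (Finset.erase_subset _ _)
      have hdisjIS : Disjoint I S := by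
        refine Finset.disjoint_left.mpr fun a ha has => ?_
        exact (Finset.mem_sdiff.mp (hSCI has)).2 ha
      have hA'card : A'.card = r := by
        rw [hA', Finset.card_union_of_disjoint hdisjIS, hIcard, hScard]; omega
      have hA'C : A' ⊆ C := by
        rw [hA']
        refine Finset.union_subset ?_ (hSCI.trans Finset.sdiff_subset)
        rw [hIC]; exact Finset.sdiff_subset
      have := hx A' (hcol A' Finset.subset_union_left hA'C hA'card)
      rw [hA'] at this
      rcases Finset.mem_union.mp this with h | h
      · exact hxI h
      · exact hSx h
    · intro hxI A' hA'
      simp only [Finset.mem_filter] at hA'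
      obtain ⟨B', _, Γ', _, _, _, heq'⟩ := hA'.2
      have : A' \ B' = I := (Prod.mk.inj heq').2
      rw [← this] at hxI
      exact (Finset.mem_sdiff.mp hxI).1
  · exact hInonempty
end

section
/- Let H, b, r, λ be positive integers with b < r + λ < H and λ < b. The number of distinct non-star symbols in the array of Construction 2 is C(H, r + λ) · C(r + λ, r + λ − b). -/
open scoped Classical

/-- The number of distinct non-star symbols in the array of Construction 2 is
`C(H, r+λ) · C(r+λ, r+λ−b)`. -/
theorem stmt13 (H b r l : ℕ) (hH : 0 < H) (hb : 0 < b) (hr : 0 < r) (hl : 0 < l)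
    (hbrl : b < r + l) (hrlH : r + l < H) (hlb : l < b) :
    (((((((Finset.Icc 1 H).powersetCard b) ×ˢ ((Finset.Icc 1 H).powersetCard l)).filter
          (fun p => p.2 ⊆ p.1)) ×ˢ ((Finset.Icc 1 H).powersetCard r)).filter
          (fun q => q.2 ∩ q.1.2 = ∅ ∧ q.1.1 ⊆ q.2 ∪ q.1.2)).image
          (fun q => (q.2 ∪ q.1.2, q.2 \ q.1.1))).card
      = Nat.choose H (r + l) * Nat.choose (r + l) (r + l - b) := by
  classical
  set S := Finset.Icc 1 H with hSdef
  have hScard : S.card = H := by simp [hSdef]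
  set T := ((S.powersetCard (r+l)) ×ˢ (S.powersetCard (r+l-b))).filter
      (fun p => p.2 ⊆ p.1) with hTdef
  have himg :
      (((((S.powersetCard b) ×ˢ (S.powersetCard l)).filter
          (fun p => p.2 ⊆ p.1)) ×ˢ (S.powersetCard r)).filter
          (fun q => q.2 ∩ q.1.2 = ∅ ∧ q.1.1 ⊆ q.2 ∪ q.1.2)).image
          (fun q => (q.2 ∪ q.1.2, q.2 \ q.1.1)) = T := by
    ext ⟨C, I⟩
    simp only [hTdef, Finset.mem_image, Finset.mem_filter, Finset.mem_product,
      Finset.mem_powersetCard, Prod.exists, Prod.mk.injEq]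
    constructor
    · rintro ⟨B, G, A, ⟨⟨⟨⟨⟨hBS, hBcard⟩, hGS, hGcard⟩, hGB⟩, hAS, hAcard⟩,
        hAG, hBAG⟩, hC, hI⟩
      subst hC hI
      have hdisj : Disjoint A G := Finset.disjoint_iff_inter_eq_empty.2 hAG
      have hCcard : (A ∪ G).card = r + l := by
        rw [Finset.card_union_of_disjoint hdisj, hAcard, hGcard]
      have hABeq : A \ B = (A ∪ G) \ B := by
        ext x
        simp only [Finset.mem_sdiff, Finset.mem_union]
        constructor
        · rintro ⟨hx, hxB⟩; exact ⟨Or.inl hx, hxB⟩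
        · rintro ⟨hx | hx, hxB⟩
          · exact ⟨hx, hxB⟩
          · exact absurd (hGB hx) hxB
      refine ⟨⟨⟨Finset.union_subset hAS hGS, hCcard⟩, Finset.sdiff_subset.trans hAS, ?_⟩,
        Finset.sdiff_subset.trans Finset.subset_union_left⟩
      rw [hABeq, Finset.card_sdiff_of_subset hBAG, hCcard, hBcard]
    · rintro ⟨⟨⟨hCS, hCcard⟩, hIS, hIcard⟩, hIC⟩
      have hBC : C \ I ⊆ C := Finset.sdiff_subset
      have hBcard : (C \ I).card = b := by
        rw [Finset.card_sdiff_of_subset hIC, hCcard, hIcard]; omega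
      obtain ⟨G, hGB, hGcard⟩ := Finset.exists_subset_card_eq (s := C \ I) (n := l) (by omega)
      have hGC : G ⊆ C := hGB.trans hBC
      have hAcard : (C \ G).card = r := by
        rw [Finset.card_sdiff_of_subset hGC, hCcard, hGcard]; omega
      have hAunion : C \ G ∪ G = C := Finset.sdiff_union_of_subset hGC
      have hGI : ∀ x ∈ I, x ∉ G := by
        intro x hx hxG
        have := hGB hxG
        rw [Finset.mem_sdiff] at this
        exact this.2 hx
      refine ⟨C \ I, G, C \ G, ⟨⟨⟨⟨⟨hBC.trans hCS, hBcard⟩, hGC.trans hCS, hGcard⟩, hGB⟩,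
        Finset.sdiff_subset.trans hCS, hAcard⟩, ?_, ?_⟩, hAunion, ?_⟩
      · ext x
        simp only [Finset.mem_inter, Finset.mem_sdiff, Finset.notMem_empty,
          iff_false, not_and]
        tauto
      · rw [hAunion]; exact hBC
      · ext x
        simp only [Finset.mem_sdiff, not_and, not_not]
        constructor
        · rintro ⟨⟨hxC, hxG⟩, hmem⟩
          exact hmem hxC
        · intro hxI
          exact ⟨⟨hIC hxI, hGI x hxI⟩, fun _ => hxI⟩
  rw [himg]
  have hbij : T.card =
      ((S.powersetCard (r+l)).sigma (fun C => C.powersetCard (r+l-b))).card := by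
    apply Finset.card_bij' (fun p _ => (⟨p.1, p.2⟩ : Σ _ : Finset ℕ, Finset ℕ))
      (fun s _ => (s.1, s.2))
    · rintro ⟨C, I⟩ hp
      simp only [hTdef, Finset.mem_filter, Finset.mem_product, Finset.mem_powersetCard] at hp
      simp only [Finset.mem_sigma, Finset.mem_powersetCard]
      exact ⟨⟨hp.1.1.1, hp.1.1.2⟩, hp.2, hp.1.2.2⟩
    · rintro ⟨C, I⟩ hs
      simp only [Finset.mem_sigma, Finset.mem_powersetCard] at hs
      simp only [hTdef, Finset.mem_filter, Finset.mem_product, Finset.mem_powersetCard]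
      exact ⟨⟨hs.1, hs.2.1.trans hs.1.1, hs.2.2⟩, hs.2.1⟩
    · rintro ⟨C, I⟩ _; rfl
    · rintro ⟨C, I⟩ _; rfl
  rw [hbij, Finset.card_sigma]
  rw [Finset.sum_congr rfl (fun C hC =>
      by rw [Finset.card_powersetCard, (Finset.mem_powersetCard.mp hC).2]),
    Finset.sum_const, Finset.card_powersetCard, hScard, smul_eq_mul]
end

section
/- Let H, r, b, λ be positive integers with λ ≤ min{r, b} and r + b − 2λ < H. In the array P of Construction 1, each column A ∈ C([H], r) contains exactly C(r, λ) · C(H − r, b − λ) non-star entries, and each non-star symbol (C, I) occurs in exactly C(r + b − 2λ, r − λ) positions of the array. -/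
open Finset


/-- In the array `P` of Construction 1: each column `A ∈ C([H], r)` contains
exactly `C(r,λ) · C(H−r, b−λ)` non-star entries, and each non-star symbol
`(C, I)` (disjoint sets with `|C| = r+b−2λ`, `|I| = λ`, `C ∪ I ⊆ [H]`) occurs in
exactly `C(r+b−2λ, r−λ)` positions of the array. -/
theorem stmt15 (H r b l : ℕ) (hH : 0 < H) (hr : 0 < r) (hb : 0 < b) (hl : 0 < l)
    (hlr : l ≤ r) (hlb : l ≤ b) (hm : r + b - 2 * l < H) :
    (∀ A ∈ (Finset.Icc 1 H).powersetCard r,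
      (((Finset.Icc 1 H).powersetCard b).filter (fun B => (A ∩ B).card = l)).card
        = Nat.choose r l * Nat.choose (H - r) (b - l))
    ∧ (∀ C I : Finset ℕ, Disjoint C I → C ∪ I ⊆ Finset.Icc 1 H →
        C.card = r + b - 2 * l → I.card = l →
        ((((Finset.Icc 1 H).powersetCard b) ×ˢ ((Finset.Icc 1 H).powersetCard r)).filter
            (fun p => (p.2 ∩ p.1).card = l
              ∧ ((p.2 ∪ p.1) \ (p.2 ∩ p.1), p.2 ∩ p.1) = (C, I))).card
          = Nat.choose (r + b - 2 * l) (r - l)) := by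
  set U := Finset.Icc 1 H with hUdef
  have hUcard : U.card = H := by simp [hUdef]
  constructor
  · intro A hA
    rw [mem_powersetCard] at hA
    obtain ⟨hAU, hAcard⟩ := hA
    have hcompl : (U \ A).card = H - r := by rw [card_sdiff_of_subset hAU, hUcard, hAcard]
    rw [← hcompl, ← hAcard, ← card_powersetCard, ← card_powersetCard, ← card_product]
    symm
    apply card_nbij' (fun p => p.1 ∪ p.2) (fun B => (A ∩ B, B \ A))
    · rintro ⟨s, t⟩ hp
      rw [mem_coe, mem_product, mem_powersetCard, mem_powersetCard] at hp
      obtain ⟨⟨hsA, hs⟩, ⟨htA, ht⟩⟩ := hp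
      have hst : Disjoint s t := by
        refine disjoint_left.2 fun x hx hx' => ?_
        exact (mem_sdiff.1 (htA hx')).2 (hsA hx)
      rw [mem_coe, mem_filter, mem_powersetCard]
      refine ⟨⟨union_subset (hsA.trans hAU) (htA.trans sdiff_subset), ?_⟩, ?_⟩
      · rw [card_union_of_disjoint hst, hs, ht]
        omega
      · have : A ∩ (s ∪ t) = s := by
          ext x
          simp only [mem_inter, mem_union]
          constructor
          · rintro ⟨hxA, hx | hx⟩
            · exact hx
            · exact absurd hxA (mem_sdiff.1 (htA hx)).2
          · intro hx; exact ⟨hsA hx, Or.inl hx⟩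
        rw [this, hs]
    · intro B hB
      rw [mem_coe, mem_filter, mem_powersetCard] at hB
      obtain ⟨⟨hBU, hBcard⟩, hcap⟩ := hB
      rw [mem_coe, mem_product, mem_powersetCard, mem_powersetCard]
      refine ⟨⟨inter_subset_left, hcap⟩, ?_, ?_⟩
      · intro x hx
        rw [mem_sdiff] at hx ⊢
        exact ⟨hBU hx.1, hx.2⟩
      · show #(B \ A) = b - l
        have h2 := card_inter_add_card_sdiff B A
        rw [inter_comm] at h2
        omega
    · rintro ⟨s, t⟩ hp
      rw [mem_coe, mem_product, mem_powersetCard, mem_powersetCard] at hp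
      obtain ⟨⟨hsA, hs⟩, ⟨htA, ht⟩⟩ := hp
      have h1 : A ∩ (s ∪ t) = s := by
        ext x
        simp only [mem_inter, mem_union]
        constructor
        · rintro ⟨hxA, hx | hx⟩
          · exact hx
          · exact absurd hxA (mem_sdiff.1 (htA hx)).2
        · intro hx; exact ⟨hsA hx, Or.inl hx⟩
      have h2 : (s ∪ t) \ A = t := by
        ext x
        simp only [mem_sdiff, mem_union]
        constructor
        · rintro ⟨hx | hx, hxA⟩
          · exact absurd (hsA hx) hxA
          · exact hx
        · intro hx; exact ⟨Or.inr hx, (mem_sdiff.1 (htA hx)).2⟩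
      simp [h1, h2]
    · intro B hB
      rw [mem_coe, mem_filter, mem_powersetCard] at hB
      simp only
      ext x
      simp only [mem_union, mem_inter, mem_sdiff]
      tauto
  · intro C I hCI hCIU hC hI
    have hrl : r - l ≤ C.card := by omega
    rw [← hC, ← card_powersetCard]
    symm
    apply card_nbij' (fun A' => ((C \ A') ∪ I, A' ∪ I)) (fun p => p.2 \ I)
    · intro A' hA'
      rw [mem_coe, mem_powersetCard] at hA'
      obtain ⟨hA'C, hA'card⟩ := hA'
      have hA'I : Disjoint A' I := hCI.mono_left hA'C
      have hCAI : Disjoint (C \ A') I := hCI.mono_left sdiff_subset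
      have hinter : (A' ∪ I) ∩ (C \ A' ∪ I) = I := by
        ext x
        simp only [mem_inter, mem_union, mem_sdiff]
        constructor
        · rintro ⟨hx1 | hx1, hx2⟩
          · rcases hx2 with ⟨_, h⟩ | h
            · exact absurd hx1 h
            · exact h
          · exact hx1
        · intro hx; exact ⟨Or.inr hx, Or.inr hx⟩
      have hunion : (A' ∪ I) ∪ (C \ A' ∪ I) = C ∪ I := by
        ext x
        simp only [mem_union, mem_sdiff]
        constructor
        · rintro ((h | h) | (⟨h, _⟩ | h))
          · exact Or.inl (hA'C h)
          · exact Or.inr h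
          · exact Or.inl h
          · exact Or.inr h
        · rintro (h | h)
          · by_cases hx : x ∈ A'
            · exact Or.inl (Or.inl hx)
            · exact Or.inr (Or.inl ⟨h, hx⟩)
          · exact Or.inl (Or.inr h)
      rw [mem_coe, mem_filter, mem_product, mem_powersetCard, mem_powersetCard]
      refine ⟨⟨⟨?_, ?_⟩, ?_, ?_⟩, ?_, ?_⟩
      · refine (union_subset ((sdiff_subset).trans ?_) ?_).trans hCIU
        · exact subset_union_left
        · exact subset_union_right
      · rw [card_union_of_disjoint hCAI, card_sdiff_of_subset hA'C, hC, hA'card, hI]; omega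
      · exact (union_subset (hA'C.trans subset_union_left) subset_union_right).trans hCIU
      · rw [card_union_of_disjoint hA'I, hA'card, hI]; omega
      · show #((A' ∪ I) ∩ (C \ A' ∪ I)) = l
        rw [hinter, hI]
      · show ((A' ∪ I ∪ (C \ A' ∪ I)) \ ((A' ∪ I) ∩ (C \ A' ∪ I)), (A' ∪ I) ∩ (C \ A' ∪ I)) = (C, I)
        rw [hinter, hunion, union_sdiff_right, sdiff_eq_self_of_disjoint hCI]
    · rintro ⟨B, A⟩ hp
      rw [mem_coe, mem_filter, mem_product, mem_powersetCard, mem_powersetCard] at hp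
      obtain ⟨⟨⟨hBU, hBcard⟩, hAU, hAcard⟩, hcap, heq⟩ := hp
      simp only [Prod.mk.injEq] at heq
      obtain ⟨hCeq, hIeq⟩ := heq
      rw [mem_coe, mem_powersetCard]
      constructor
      · intro x hx
        rw [mem_sdiff] at hx
        rw [← hCeq, mem_sdiff, ← hIeq] at *
        refine ⟨mem_union_left _ hx.1, ?_⟩
        rw [mem_inter]
        rw [hIeq] at hx
        intro h
        exact hx.2 (by rw [← hIeq, mem_inter]; exact h)
      · have hIA : I ⊆ A := by rw [← hIeq]; exact inter_subset_left
        rw [card_sdiff_of_subset hIA, hAcard, hI]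
    · intro A' hA'
      rw [mem_coe, mem_powersetCard] at hA'
      obtain ⟨hA'C, hA'card⟩ := hA'
      have hA'I : Disjoint A' I := hCI.mono_left hA'C
      simp only
      rw [union_sdiff_right, sdiff_eq_self_of_disjoint hA'I]
    · rintro ⟨B, A⟩ hp
      rw [mem_coe, mem_filter, mem_product, mem_powersetCard, mem_powersetCard] at hp
      obtain ⟨⟨⟨hBU, hBcard⟩, hAU, hAcard⟩, hcap, heq⟩ := hp
      simp only [Prod.mk.injEq] at heq
      obtain ⟨hCeq, hIeq⟩ := heq
      simp only [Prod.mk.injEq]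
      have hIA : I ⊆ A := by rw [← hIeq]; exact inter_subset_left
      have hIB : I ⊆ B := by rw [← hIeq]; exact inter_subset_right
      constructor
      · -- C \ (A \ I) ∪ I = B
        ext x
        simp only [mem_union, mem_sdiff, ← hCeq, ← hIeq, mem_inter]
        by_cases hxA : x ∈ A <;> by_cases hxB : x ∈ B <;> simp [hxA, hxB] <;> tauto
      · -- A \ I ∪ I = A
        rw [sdiff_union_of_subset hIA]
end

section
/- Let H, r, b, λ be positive integers with λ ≤ min{r,b}, r + b − 2λ < H, and suppose symbols (C₁, I₁) and (C₂, I₂) of the array P of Construction 1 occur at positions (B₁, A₁) and (B₂, A₂) respectively with (C₁, I₁) = (C₂, I₂), A₁ ≠ A₂ and B₁ ≠ B₂. Then |A₁ ∩ B₂| > λ and |A₂ ∩ B₁| > λ. -/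
lemma stmt16_aux (l : ℕ) (X Y U V : Finset ℕ)
    (hI : X ∩ Y = U ∩ V)
    (hC : (X ∪ Y) \ (X ∩ Y) = (U ∪ V) \ (U ∩ V))
    (hcard : X.card = U.card) (hl : (X ∩ Y).card = l)
    (hne : X ≠ U) : l < (X ∩ V).card := by
  by_contra h
  push_neg at h
  have hsub : X ∩ Y ⊆ X ∩ V := by
    intro x hx
    have hx' : x ∈ U ∩ V := hI ▸ hx
    exact Finset.mem_inter.mpr ⟨(Finset.mem_inter.mp hx).1, (Finset.mem_inter.mp hx').2⟩
  have hXV : X ∩ Y = X ∩ V :=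
    Finset.eq_of_subset_of_card_le hsub (by omega)
  have hXU : X ⊆ U := by
    intro x hx
    by_cases hxI : x ∈ X ∩ Y
    · exact (Finset.mem_inter.mp (hI ▸ hxI)).1
    · have hxC : x ∈ (X ∪ Y) \ (X ∩ Y) :=
        Finset.mem_sdiff.mpr ⟨Finset.mem_union_left _ hx, hxI⟩
      rw [hC] at hxC
      obtain ⟨hxUV, _⟩ := Finset.mem_sdiff.mp hxC
      rcases Finset.mem_union.mp hxUV with hU | hV
      · exact hU
      · exact absurd (hXV ▸ Finset.mem_inter.mpr ⟨hx, hV⟩) hxI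
  exact hne (Finset.eq_of_subset_of_card_le hXU (by omega))

/-- Quantitative cross-star condition for the array `P` of Construction 1: if
the same symbol occurs at positions `(B₁, A₁)` and `(B₂, A₂)` with `A₁ ≠ A₂` and
`B₁ ≠ B₂`, then `|A₁ ∩ B₂| > λ` and `|A₂ ∩ B₁| > λ`. -/
theorem stmt16 (H r b l : ℕ) (hH : 0 < H) (hr : 0 < r) (hb : 0 < b) (hl : 0 < l)
    (hlr : l ≤ r) (hlb : l ≤ b) (hm : r + b - 2 * l < H)
    (B₁ B₂ A₁ A₂ : Finset ℕ)
    (hB₁ : B₁ ∈ (Finset.Icc 1 H).powersetCard b)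
    (hB₂ : B₂ ∈ (Finset.Icc 1 H).powersetCard b)
    (hA₁ : A₁ ∈ (Finset.Icc 1 H).powersetCard r)
    (hA₂ : A₂ ∈ (Finset.Icc 1 H).powersetCard r)
    (h₁ : (A₁ ∩ B₁).card = l) (h₂ : (A₂ ∩ B₂).card = l)
    (heq : ((A₁ ∪ B₁) \ (A₁ ∩ B₁), A₁ ∩ B₁) = ((A₂ ∪ B₂) \ (A₂ ∩ B₂), A₂ ∩ B₂))
    (hA : A₁ ≠ A₂) (hB : B₁ ≠ B₂) :
    l < (A₁ ∩ B₂).card ∧ l < (A₂ ∩ B₁).card := by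
  have hC : (A₁ ∪ B₁) \ (A₁ ∩ B₁) = (A₂ ∪ B₂) \ (A₂ ∩ B₂) := congrArg Prod.fst heq
  have hI : A₁ ∩ B₁ = A₂ ∩ B₂ := congrArg Prod.snd heq
  have cA₁ : A₁.card = r := (Finset.mem_powersetCard.mp hA₁).2
  have cA₂ : A₂.card = r := (Finset.mem_powersetCard.mp hA₂).2
  constructor
  · exact stmt16_aux l A₁ B₁ A₂ B₂ hI hC (by omega) h₁ hA
  · exact stmt16_aux l A₂ B₂ A₁ B₁ hI.symm hC.symm (by omega) h₂ hA.symm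
end
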